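/- The map sending a sublattice S of the concept lattice B(K) to the context K_S := (∪{A : (A,B) ∈ S}, ∪{B : (A,B) ∈ S}, ∪{A×B : (A,B) ∈ S}) is a bijection from the set of all sublattices of B(K) onto the set of all closed-subcontexts of K. -/

import Mathlib

set_option linter.unusedSectionVars false
set_option linter.unusedVariables false


variable {G M : Type*} [Fintype G] [Fintype M]

/-- Attribute derivation A' of an object set A w.r.t. incidence I. -/
def fcaExtDeriv (I : Set (G × M)) (A : Set G) : Set M := {m | ∀ g ∈ A, (g, m) ∈ I}

/-- Object derivation B' of an attribute set B w.r.t. incidence I. -/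
def intDeriv (I : Set (G × M)) (B : Set M) : Set G := {g | ∀ m ∈ B, (g, m) ∈ I}

/-- (A,B) is a formal concept of (G,M,I). -/
def IsConcept (I : Set (G × M)) (A : Set G) (B : Set M) : Prop :=
  fcaExtDeriv I A = B ∧ intDeriv I B = A

/-- Derivation of an object set inside the (sub)context (H,N,J). -/
def subExtDeriv (N : Set M) (J : Set (G × M)) (A : Set G) : Set M :=
  {n ∈ N | ∀ g ∈ A, (g, n) ∈ J}

/-- Derivation of an attribute set inside the (sub)context (H,N,J). -/
def subIntDeriv (H : Set G) (J : Set (G × M)) (B : Set M) : Set G :=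
  {h ∈ H | ∀ n ∈ B, (h, n) ∈ J}

/-- (A,B) is a formal concept of the context (H,N,J). -/
def IsSubConcept (H : Set G) (N : Set M) (J : Set (G × M)) (A : Set G) (B : Set M) : Prop :=
  A ⊆ H ∧ B ⊆ N ∧ subExtDeriv N J A = B ∧ subIntDeriv H J B = A

/-- (H,N,J) is a closed-subcontext of (G,M,I). -/
def IsClosedSubcontext (I : Set (G × M)) (H : Set G) (N : Set M) (J : Set (G × M)) : Prop :=
  J ⊆ I ∩ H ×ˢ N ∧ ∀ A B, IsSubConcept H N J A B → IsConcept I A B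

/-- Binary join in the concept lattice of (G,M,I). -/
def conceptJoin (I : Set (G × M)) (c d : Set G × Set M) : Set G × Set M :=
  (intDeriv I (c.2 ∩ d.2), c.2 ∩ d.2)

/-- Binary meet in the concept lattice of (G,M,I). -/
def conceptMeet (I : Set (G × M)) (c d : Set G × Set M) : Set G × Set M :=
  (c.1 ∩ d.1, fcaExtDeriv I (c.1 ∩ d.1))

/-- S is a sublattice of the concept lattice of (G,M,I). -/
def IsConceptSublattice (I : Set (G × M)) (S : Set (Set G × Set M)) : Prop :=
  S.Nonempty ∧ (∀ c ∈ S, IsConcept I c.1 c.2) ∧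
    ∀ c ∈ S, ∀ d ∈ S, conceptJoin I c d ∈ S ∧ conceptMeet I c d ∈ S

/-- Image of the concept set of the subcontext [H,N] under φ₁(A,B)=(A'',A'). -/
def phi1Image (I : Set (G × M)) (H : Set G) (N : Set M) : Set (Set G × Set M) :=
  {c | ∃ A B, IsSubConcept H N (I ∩ H ×ˢ N) A B ∧
      c = (intDeriv I (fcaExtDeriv I A), fcaExtDeriv I A)}

/-- Image of the concept set of the subcontext [H,N] under φ₂(A,B)=(B',B''). -/
def phi2Image (I : Set (G × M)) (H : Set G) (N : Set M) : Set (Set G × Set M) :=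
  {c | ∃ A B, IsSubConcept H N (I ∩ H ×ˢ N) A B ∧
      c = (intDeriv I B, fcaExtDeriv I (intDeriv I B))}

/-- [H,N] is (isomorphic to) a contranominal scale of dimension k in (G,M,I). -/
def IsContranominal (I : Set (G × M)) (k : ℕ) (H : Set G) (N : Set M) : Prop :=
  ∃ f : Fin k → G, ∃ g : Fin k → M, Function.Injective f ∧ Function.Injective g ∧
    H = Set.range f ∧ N = Set.range g ∧ ∀ i j, (f i, g j) ∈ I ↔ i ≠ j

/-- O is a minimal object generator of the concept with extent A. -/
def IsMinObjGen (I : Set (G × M)) (A : Set G) (O : Set G) : Prop :=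
  intDeriv I (fcaExtDeriv I O) = A ∧ ∀ P ⊂ O, intDeriv I (fcaExtDeriv I P) ≠ A

/-- Q is a minimal attribute generator of the concept with intent B. -/
def IsMinAttGen (I : Set (G × M)) (B : Set M) (Q : Set M) : Prop :=
  fcaExtDeriv I (intDeriv I Q) = B ∧ ∀ P ⊂ Q, fcaExtDeriv I (intDeriv I P) ≠ B

/-- Union of all minimal object generators of the atoms of a Boolean suborder
given by an order embedding f of the powerset of Fin k. -/
def genH (I : Set (G × M)) {k : ℕ} (f : Set (Fin k) → Set G × Set M) : Set G :=
  {g | ∃ i : Fin k, ∃ O : Set G, IsMinObjGen I (f {i}).1 O ∧ g ∈ O}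

/-- Union of all minimal attribute generators of the coatoms of a Boolean suborder. -/
def genN (I : Set (G × M)) {k : ℕ} (f : Set (Fin k) → Set G × Set M) : Set M :=
  {m | ∃ i : Fin k, ∃ Q : Set M, IsMinAttGen I (f {i}ᶜ).2 Q ∧ m ∈ Q}

theorem Set.Finite.exists_maximal_wrt {α β : Type*} [PartialOrder β] (f : α → β) (s : Set α)
    (h : s.Finite) (hs : s.Nonempty) : ∃ a ∈ s, ∀ a' ∈ s, f a ≤ f a' → f a = f a' := by
  obtain ⟨a, ha, hmax⟩ := Set.Finite.exists_maximalFor f s h hs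
  exact ⟨a, ha, fun a' ha' hle => le_antisymm hle (hmax ha' hle)⟩

theorem Set.Finite.exists_minimal_wrt {α β : Type*} [PartialOrder β] (f : α → β) (s : Set α)
    (h : s.Finite) (hs : s.Nonempty) : ∃ a ∈ s, ∀ a' ∈ s, f a' ≤ f a → f a = f a' := by
  obtain ⟨a, ha, hmin⟩ := Set.Finite.exists_minimalFor f s h hs
  exact ⟨a, ha, fun a' ha' hle => le_antisymm (hmin ha' hle) hle⟩

section Aux

variable (I : Set (G × M))

lemma extDeriv_anti {A A' : Set G} (h : A ⊆ A') : fcaExtDeriv I A' ⊆ fcaExtDeriv I A :=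
  fun m hm g hg => hm g (h hg)

lemma intDeriv_anti {B B' : Set M} (h : B ⊆ B') : intDeriv I B' ⊆ intDeriv I B :=
  fun g hg m hm => hg m (h hm)

lemma concept_int_anti {A C : Set G} {B D : Set M} (hc : IsConcept I A B)
    (hd : IsConcept I C D) (h : A ⊆ C) : D ⊆ B := by
  rw [← hc.1, ← hd.1]; exact extDeriv_anti I h

variable {H : Set G} {N : Set M} {J : Set (G × M)}

lemma subExtDeriv_subset_N (A : Set G) : subExtDeriv N J A ⊆ N := fun _ hn => hn.1

lemma subIntDeriv_subset_H (B : Set M) : subIntDeriv H J B ⊆ H := fun _ hg => hg.1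

lemma subExtDeriv_anti {A A' : Set G} (h : A ⊆ A') :
    subExtDeriv N J A' ⊆ subExtDeriv N J A :=
  fun n hn => ⟨hn.1, fun g hg => hn.2 g (h hg)⟩

lemma subIntDeriv_anti {B B' : Set M} (h : B ⊆ B') :
    subIntDeriv H J B' ⊆ subIntDeriv H J B :=
  fun g hg => ⟨hg.1, fun n hn => hg.2 n (h hn)⟩

lemma subset_sub_closure_ext {A : Set G} (hA : A ⊆ H) :
    A ⊆ subIntDeriv H J (subExtDeriv N J A) :=
  fun g hg => ⟨hA hg, fun _ hn => hn.2 g hg⟩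

lemma subset_sub_closure_int {B : Set M} (hB : B ⊆ N) :
    B ⊆ subExtDeriv N J (subIntDeriv H J B) :=
  fun n hn => ⟨hB hn, fun _ hg => hg.2 n hn⟩

lemma subExtDeriv_triple {A : Set G} (hA : A ⊆ H) :
    subExtDeriv N J (subIntDeriv H J (subExtDeriv N J A)) = subExtDeriv N J A :=
  Set.Subset.antisymm (subExtDeriv_anti (subset_sub_closure_ext hA))
    (subset_sub_closure_int (subExtDeriv_subset_N A))

lemma subIntDeriv_triple {B : Set M} (hB : B ⊆ N) :
    subIntDeriv H J (subExtDeriv N J (subIntDeriv H J B)) = subIntDeriv H J B :=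
  Set.Subset.antisymm (subIntDeriv_anti (subset_sub_closure_int hB))
    (subset_sub_closure_ext (subIntDeriv_subset_H B))

lemma subConcept_mk_ext {A : Set G} (hA : A ⊆ H) :
    IsSubConcept H N J (subIntDeriv H J (subExtDeriv N J A)) (subExtDeriv N J A) :=
  ⟨subIntDeriv_subset_H _, subExtDeriv_subset_N _, subExtDeriv_triple hA, rfl⟩

lemma subConcept_mk_int {B : Set M} (hB : B ⊆ N) :
    IsSubConcept H N J (subIntDeriv H J B) (subExtDeriv N J (subIntDeriv H J B)) :=
  ⟨subIntDeriv_subset_H _, subExtDeriv_subset_N _, rfl, subIntDeriv_triple hB⟩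

lemma subExtDeriv_union (A₁ A₂ : Set G) :
    subExtDeriv N J (A₁ ∪ A₂) = subExtDeriv N J A₁ ∩ subExtDeriv N J A₂ := by
  ext n
  constructor
  · rintro ⟨hnN, h⟩
    exact ⟨⟨hnN, fun g hg => h g (Or.inl hg)⟩, ⟨hnN, fun g hg => h g (Or.inr hg)⟩⟩
  · rintro ⟨⟨hnN, h1⟩, ⟨_, h2⟩⟩
    exact ⟨hnN, fun g hg => hg.elim (h1 g) (h2 g)⟩

lemma subIntDeriv_union (B₁ B₂ : Set M) :
    subIntDeriv H J (B₁ ∪ B₂) = subIntDeriv H J B₁ ∩ subIntDeriv H J B₂ := by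
  ext g
  constructor
  · rintro ⟨hgH, h⟩
    exact ⟨⟨hgH, fun n hn => h n (Or.inl hn)⟩, ⟨hgH, fun n hn => h n (Or.inr hn)⟩⟩
  · rintro ⟨⟨hgH, h1⟩, ⟨_, h2⟩⟩
    exact ⟨hgH, fun n hn => hn.elim (h1 n) (h2 n)⟩

end Aux

/-- Membership characterization of the union relation. -/
lemma mem_unionJ {S : Set (Set G × Set M)} {g : G} {n : M} :
    (g, n) ∈ (⋃ c ∈ S, c.1 ×ˢ c.2) ↔ ∃ c ∈ S, g ∈ c.1 ∧ n ∈ c.2 := by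
  rw [Set.mem_iUnion₂]
  constructor
  · rintro ⟨c, hc, hgn⟩; exact ⟨c, hc, hgn.1, hgn.2⟩
  · rintro ⟨c, hc, h1, h2⟩; exact ⟨c, hc, h1, h2⟩

/-- Key lemma: every concept of the union subcontext of a sublattice S lies in S. -/
lemma key_mem (I : Set (G × M)) (S : Set (Set G × Set M)) (hS : IsConceptSublattice I S)
    {A : Set G} {B : Set M}
    (h : IsSubConcept (⋃ c ∈ S, c.1) (⋃ c ∈ S, c.2) (⋃ c ∈ S, c.1 ×ˢ c.2) A B) :
    (A, B) ∈ S := by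
  obtain ⟨hne, hcon, hcl⟩ := hS
  obtain ⟨hAH, hBN, hAB, hBA⟩ := h
  -- top element of S
  obtain ⟨t, htS, htmax⟩ := (Set.toFinite S).exists_maximal_wrt Prod.fst S hne
  have htop : ∀ c ∈ S, c.1 ⊆ t.1 := by
    intro c hc
    have hj := (hcl t htS c hc).1
    have h1 : t.1 ⊆ (conceptJoin I t c).1 := by
      have h' := intDeriv_anti I (Set.inter_subset_left : t.2 ∩ c.2 ⊆ t.2)
      rw [(hcon t htS).2] at h'
      exact h'
    have h2 : c.1 ⊆ (conceptJoin I t c).1 := by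
      have h' := intDeriv_anti I (Set.inter_subset_right : t.2 ∩ c.2 ⊆ c.2)
      rw [(hcon c hc).2] at h'
      exact h'
    have heq := htmax _ hj h1
    rw [heq]; exact h2
  -- minimal element of T := {c ∈ S | A ⊆ c.1}
  have hTne : ({c ∈ S | A ⊆ c.1} : Set (Set G × Set M)).Nonempty := by
    refine ⟨t, htS, fun g hg => ?_⟩
    obtain ⟨c, hc, hgc⟩ := Set.mem_iUnion₂.mp (hAH hg)
    exact htop c hc hgc
  obtain ⟨e, heT, hemin⟩ :=
    (Set.toFinite _).exists_minimal_wrt Prod.fst {c ∈ S | A ⊆ c.1} hTne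
  obtain ⟨heS, hAe⟩ := heT
  have hmin : ∀ c ∈ S, A ⊆ c.1 → e.1 ⊆ c.1 := by
    intro c hcS hAc
    have hm := (hcl e heS c hcS).2
    have h1 : (conceptMeet I e c).1 ⊆ e.1 := Set.inter_subset_left
    have h2 : e.1 = (conceptMeet I e c).1 :=
      hemin _ ⟨hm, Set.subset_inter hAe hAc⟩ h1
    rw [h2]; exact Set.inter_subset_right
  -- B = e.2
  have hBe : B = e.2 := by
    apply Set.Subset.antisymm
    · intro n hn
      obtain ⟨c₀, hc₀, hnc₀⟩ := Set.mem_iUnion₂.mp (hBN hn)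
      obtain ⟨d, hdT, hdmax⟩ :=
        (Set.toFinite _).exists_maximal_wrt Prod.fst {c ∈ S | n ∈ c.2} ⟨c₀, hc₀, hnc₀⟩
      obtain ⟨hdS, hnd⟩ := hdT
      have hdtop : ∀ c ∈ S, n ∈ c.2 → c.1 ⊆ d.1 := by
        intro c hcS hnc
        have hj := (hcl d hdS c hcS).1
        have h2 : c.1 ⊆ (conceptJoin I d c).1 := by
          have h' := intDeriv_anti I (Set.inter_subset_right : d.2 ∩ c.2 ⊆ c.2)
          rw [(hcon c hcS).2] at h'
          exact h'
        have h1 : d.1 ⊆ (conceptJoin I d c).1 := by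
          have h' := intDeriv_anti I (Set.inter_subset_left : d.2 ∩ c.2 ⊆ d.2)
          rw [(hcon d hdS).2] at h'
          exact h'
        have heq := hdmax _ ⟨hcl d hdS c hcS |>.1, ⟨hnd, hnc⟩⟩ h1
        rw [← heq] at h2; exact h2
      have hAd : A ⊆ d.1 := by
        intro g hg
        have hg' : g ∈ subIntDeriv (⋃ c ∈ S, c.1) (⋃ c ∈ S, c.1 ×ˢ c.2) B := hBA ▸ hg
        obtain ⟨c, hcS, hgc, hnc⟩ := mem_unionJ.mp (hg'.2 n hn)
        exact hdtop c hcS hnc hgc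
      have hed : e.1 ⊆ d.1 := hmin d hdS hAd
      exact concept_int_anti I (hcon e heS) (hcon d hdS) hed hnd
    · intro n hn
      rw [← hAB]
      exact ⟨Set.mem_iUnion₂.mpr ⟨e, heS, hn⟩,
        fun g hg => mem_unionJ.mpr ⟨e, heS, hAe hg, hn⟩⟩
  -- A = e.1
  have hAe' : A = e.1 := by
    apply Set.Subset.antisymm hAe
    intro g hg
    rw [← hBA]
    exact ⟨Set.mem_iUnion₂.mpr ⟨e, heS, hg⟩,
      fun n hn => mem_unionJ.mpr ⟨e, heS, hg, hBe ▸ hn⟩⟩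
  have : (A, B) = e := by rw [hAe', hBe]
  rw [this]; exact heS

lemma unionJ_subset_I (I : Set (G × M)) (S : Set (Set G × Set M))
    (hcon : ∀ c ∈ S, IsConcept I c.1 c.2) : (⋃ c ∈ S, c.1 ×ˢ c.2) ⊆ I := by
  rintro ⟨g, n⟩ hgn
  obtain ⟨c, hcS, hgc, hnc⟩ := mem_unionJ.mp hgn
  have := (hcon c hcS).1
  rw [← this] at hnc
  exact hnc g hgc

/-- Every element of a sublattice S is a concept of the union subcontext. -/
lemma mem_subconcept (I : Set (G × M)) (S : Set (Set G × Set M))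
    (hS : IsConceptSublattice I S) {c : Set G × Set M} (hc : c ∈ S) :
    IsSubConcept (⋃ c ∈ S, c.1) (⋃ c ∈ S, c.2) (⋃ c ∈ S, c.1 ×ˢ c.2) c.1 c.2 := by
  obtain ⟨hne, hcon, hcl⟩ := hS
  refine ⟨?_, ?_, ?_, ?_⟩
  · intro g hg; exact Set.mem_iUnion₂.mpr ⟨c, hc, hg⟩
  · intro n hn; exact Set.mem_iUnion₂.mpr ⟨c, hc, hn⟩
  · apply Set.Subset.antisymm
    · rintro n ⟨hnN, hall⟩
      rw [← (hcon c hc).1]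
      intro g hg
      exact unionJ_subset_I I S hcon (hall g hg)
    · intro n hn
      exact ⟨Set.mem_iUnion₂.mpr ⟨c, hc, hn⟩,
        fun g hg => mem_unionJ.mpr ⟨c, hc, hg, hn⟩⟩
  · apply Set.Subset.antisymm
    · rintro g ⟨hgH, hall⟩
      rw [← (hcon c hc).2]
      intro n hn
      exact unionJ_subset_I I S hcon (hall n hn)
    · intro g hg
      exact ⟨Set.mem_iUnion₂.mpr ⟨c, hc, hg⟩,
        fun n hn => mem_unionJ.mpr ⟨c, hc, hg, hn⟩⟩

/-- Surjectivity: the set of subconcepts of a closed subcontext is a sublattice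
mapping back onto it. -/
lemma surj_aux (I : Set (G × M)) (H : Set G) (N : Set M) (J : Set (G × M))
    (hT : IsClosedSubcontext I H N J) :
    IsConceptSublattice I {c : Set G × Set M | IsSubConcept H N J c.1 c.2} ∧
      (⋃ c ∈ {c : Set G × Set M | IsSubConcept H N J c.1 c.2}, c.1) = H ∧
      (⋃ c ∈ {c : Set G × Set M | IsSubConcept H N J c.1 c.2}, c.2) = N ∧
      (⋃ c ∈ {c : Set G × Set M | IsSubConcept H N J c.1 c.2}, c.1 ×ˢ c.2) = J := by
  obtain ⟨hJI, hcl⟩ := hT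
  set S : Set (Set G × Set M) := {c | IsSubConcept H N J c.1 c.2} with hSdef
  have hJHN : ∀ p ∈ J, p.1 ∈ H ∧ p.2 ∈ N := fun p hp => (hJI hp).2
  have hSlat : IsConceptSublattice I S := by
    refine ⟨⟨(subIntDeriv H J ∅, subExtDeriv N J (subIntDeriv H J ∅)),
      subConcept_mk_int (Set.empty_subset N)⟩, fun c hc => hcl c.1 c.2 hc, ?_⟩
    intro c hc d hd
    constructor
    · -- join
      have hD : subExtDeriv N J (c.1 ∪ d.1) = c.2 ∩ d.2 := by
        rw [subExtDeriv_union, hc.2.2.1, hd.2.2.1]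
      have hsc := subConcept_mk_ext (N := N) (J := J) (Set.union_subset hc.1 hd.1)
      rw [hD] at hsc
      have hIc := hcl _ _ hsc
      have heq : conceptJoin I c d = (subIntDeriv H J (c.2 ∩ d.2), c.2 ∩ d.2) := by
        unfold conceptJoin
        rw [hIc.2]
      rw [hSdef]
      show IsSubConcept H N J (conceptJoin I c d).1 (conceptJoin I c d).2
      rw [heq]
      exact hsc
    · -- meet
      have hC : subIntDeriv H J (c.2 ∪ d.2) = c.1 ∩ d.1 := by
        rw [subIntDeriv_union, hc.2.2.2, hd.2.2.2]
      have hsc := subConcept_mk_int (H := H) (J := J) (Set.union_subset hc.2.1 hd.2.1)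
      rw [hC] at hsc
      have hIc := hcl _ _ hsc
      have heq : conceptMeet I c d = (c.1 ∩ d.1, subExtDeriv N J (c.1 ∩ d.1)) := by
        unfold conceptMeet
        rw [hIc.1]
      rw [hSdef]
      show IsSubConcept H N J (conceptMeet I c d).1 (conceptMeet I c d).2
      rw [heq]
      exact hsc
  refine ⟨hSlat, ?_, ?_, ?_⟩
  · -- union of extents = H
    apply Set.Subset.antisymm
    · exact Set.iUnion₂_subset fun c hc => hc.1
    · intro h hh
      refine Set.mem_iUnion₂.mpr ⟨(subIntDeriv H J (subExtDeriv N J {h}), subExtDeriv N J {h}),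
        subConcept_mk_ext (Set.singleton_subset_iff.mpr hh), ?_⟩
      exact subset_sub_closure_ext (Set.singleton_subset_iff.mpr hh) rfl
  · -- union of intents = N
    apply Set.Subset.antisymm
    · exact Set.iUnion₂_subset fun c hc => hc.2.1
    · intro n hn
      refine Set.mem_iUnion₂.mpr ⟨(subIntDeriv H J {n}, subExtDeriv N J (subIntDeriv H J {n})),
        subConcept_mk_int (Set.singleton_subset_iff.mpr hn), ?_⟩
      exact subset_sub_closure_int (Set.singleton_subset_iff.mpr hn) rfl
  · -- union of rectangles = J
    apply Set.Subset.antisymm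
    · rintro ⟨g, n⟩ hgn
      obtain ⟨c, hcS, hgc, hnc⟩ := mem_unionJ.mp hgn
      have : n ∈ subExtDeriv N J c.1 := hcS.2.2.1.symm ▸ hnc
      exact this.2 g hgc
    · rintro ⟨g, n⟩ hgn
      obtain ⟨hgH, hnN⟩ := hJHN _ hgn
      refine mem_unionJ.mpr
        ⟨(subIntDeriv H J (subExtDeriv N J {g}), subExtDeriv N J {g}),
          subConcept_mk_ext (Set.singleton_subset_iff.mpr hgH), ?_, ?_⟩
      · exact subset_sub_closure_ext (Set.singleton_subset_iff.mpr hgH) rfl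
      · exact ⟨hnN, fun x hx => by rwa [Set.mem_singleton_iff.mp hx]⟩

theorem stmt2 (I : Set (G × M)) :
    Set.BijOn
      (fun S : Set (Set G × Set M) =>
        ((⋃ c ∈ S, c.1, ⋃ c ∈ S, c.2, ⋃ c ∈ S, c.1 ×ˢ c.2) : Set G × Set M × Set (G × M)))
      {S | IsConceptSublattice I S}
      {T | IsClosedSubcontext I T.1 T.2.1 T.2.2} := by
  refine ⟨?_, ?_, ?_⟩
  · -- MapsTo
    intro S hS
    refine ⟨?_, ?_⟩
    · rintro ⟨g, n⟩ hgn
      obtain ⟨c, hcS, hgc, hnc⟩ := mem_unionJ.mp hgn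
      refine ⟨unionJ_subset_I I S hS.2.1 hgn, ?_, ?_⟩
      · exact Set.mem_iUnion₂.mpr ⟨c, hcS, hgc⟩
      · exact Set.mem_iUnion₂.mpr ⟨c, hcS, hnc⟩
    · intro A B h
      exact hS.2.1 (A, B) (key_mem I S hS h)
  · -- InjOn
    intro S₁ h₁ S₂ h₂ heq
    have e1 : (⋃ c ∈ S₁, c.1) = ⋃ c ∈ S₂, c.1 := congrArg Prod.fst heq
    have e2 : (⋃ c ∈ S₁, c.2) = ⋃ c ∈ S₂, c.2 := congrArg (fun p => p.2.1) heq
    have e3 : (⋃ c ∈ S₁, c.1 ×ˢ c.2) = ⋃ c ∈ S₂, c.1 ×ˢ c.2 :=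
      congrArg (fun p => p.2.2) heq
    ext c
    constructor
    · intro hc
      have h := mem_subconcept I S₁ h₁ hc
      rw [e1, e2, e3] at h
      exact key_mem I S₂ h₂ h
    · intro hc
      have h := mem_subconcept I S₂ h₂ hc
      rw [← e1, ← e2, ← e3] at h
      exact key_mem I S₁ h₁ h
  · -- SurjOn
    rintro ⟨H, N, J⟩ hT
    obtain ⟨hlat, hH, hN, hJ⟩ := surj_aux I H N J hT
    exact ⟨{c : Set G × Set M | IsSubConcept H N J c.1 c.2}, hlat, by
      simp only []
      rw [hH, hN, hJ]⟩
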